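/- Let a, b, c, r be real numbers such that (2·cosh a)² + (2·cosh b)² + (2·cosh c)² − (2·cosh a)(2·cosh b)(2·cosh c) = −2·cosh(2r) + 2. Then sinh²(a)·sinh²(b) − (cosh(a)·cosh(b) − cosh(c))² = cosh²(r). In particular, if moreover |cosh(a)cosh(b) − cosh(c)| ≤ sinh(a)sinh(b) with a,b > 0 and θ = arccos((cosh(a)cosh(b) − cosh(c))/(sinh(a)sinh(b))), then sinh²(a)·sinh²(b)·sin²(θ) = cosh²(r). -/
import Mathlib


open Real

/-- If the traces `2cosh a, 2cosh b, 2cosh c` satisfy the generalized Markoff cubic with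
boundary term `−2cosh(2r)+2`, then `sinh²a sinh²b − (cosh a cosh b − cosh c)² = cosh²r`;
in particular with `θ = arccos((cosh a cosh b − cosh c)/(sinh a sinh b))` one has
`sinh²a sinh²b sin²θ = cosh²r`. -/
theorem markoff_cubic_angle_relation (a b c r : ℝ)
    (h : (2 * Real.cosh a) ^ 2 + (2 * Real.cosh b) ^ 2 + (2 * Real.cosh c) ^ 2
        - (2 * Real.cosh a) * (2 * Real.cosh b) * (2 * Real.cosh c)
        = -2 * Real.cosh (2 * r) + 2) :
    Real.sinh a ^ 2 * Real.sinh b ^ 2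
        - (Real.cosh a * Real.cosh b - Real.cosh c) ^ 2 = Real.cosh r ^ 2
    ∧ (∀ θ : ℝ,
        |Real.cosh a * Real.cosh b - Real.cosh c| ≤ Real.sinh a * Real.sinh b →
        0 < a → 0 < b →
        θ = Real.arccos ((Real.cosh a * Real.cosh b - Real.cosh c)
              / (Real.sinh a * Real.sinh b)) →
        Real.sinh a ^ 2 * Real.sinh b ^ 2 * Real.sin θ ^ 2 = Real.cosh r ^ 2) := by
  have key : Real.sinh a ^ 2 * Real.sinh b ^ 2
      - (Real.cosh a * Real.cosh b - Real.cosh c) ^ 2 = Real.cosh r ^ 2 := by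
    have h2r : Real.cosh (2 * r) = 2 * Real.cosh r ^ 2 - 1 := by
      rw [Real.cosh_two_mul, Real.sinh_sq]; ring
    have sa : Real.sinh a ^ 2 = Real.cosh a ^ 2 - 1 := Real.sinh_sq a
    have sb : Real.sinh b ^ 2 = Real.cosh b ^ 2 - 1 := Real.sinh_sq b
    rw [h2r] at h
    nlinarith [h, sa, sb]
  refine ⟨key, fun θ habs ha hb hθ => ?_⟩
  have hsa : 0 < Real.sinh a := Real.sinh_pos_iff.2 ha
  have hsb : 0 < Real.sinh b := Real.sinh_pos_iff.2 hb
  have hprod : 0 < Real.sinh a * Real.sinh b := mul_pos hsa hsb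
  set x := (Real.cosh a * Real.cosh b - Real.cosh c) / (Real.sinh a * Real.sinh b) with hx
  have hx2 : x ^ 2 ≤ 1 := by
    rw [hx, div_pow, div_le_one (by positivity)]
    have h1 : (Real.cosh a * Real.cosh b - Real.cosh c) ^ 2
        = |Real.cosh a * Real.cosh b - Real.cosh c| ^ 2 := (sq_abs _).symm
    rw [h1]
    have h2 : |Real.cosh a * Real.cosh b - Real.cosh c| ^ 2
        ≤ (Real.sinh a * Real.sinh b) ^ 2 := by
      apply sq_le_sq' _ habs
      linarith [abs_nonneg (Real.cosh a * Real.cosh b - Real.cosh c)]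
    nlinarith [h2]
  
  have hsin : Real.sin θ ^ 2 = 1 - x ^ 2 := by
    rw [hθ, Real.sin_arccos, Real.sq_sqrt (by linarith)]
  rw [hsin]
  have hxmul : x * (Real.sinh a * Real.sinh b)
      = Real.cosh a * Real.cosh b - Real.cosh c := by
    rw [hx, div_mul_cancel₀]
    exact ne_of_gt hprod
  have : x ^ 2 * (Real.sinh a ^ 2 * Real.sinh b ^ 2)
      = (Real.cosh a * Real.cosh b - Real.cosh c) ^ 2 := by
    rw [← hxmul]; ring
  nlinarith [key, this]
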